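/- Let R satisfy the distributional equation R =_d q + M R with R and M independent, where q > 0 is a constant, P(0 ≤ M ≤ 1) = 1, and p := P(M = 1) ∈ (0,1). Then lim_{x→∞} (ln P(R > x))/x = (ln p)/q. -/

import Mathlib

open Filter Set MeasureTheory ProbabilityTheory
open scoped ENNReal NNReal

namespace Stmt4Aux


lemma meas_slice (ν : Measure ℝ) [SFinite ν] (x : ℝ) :
    Measurable fun m : ℝ => ν {r : ℝ | x < m * r} := by
  have hs : MeasurableSet {p : ℝ × ℝ | x < p.1 * p.2} :=
    measurableSet_lt measurable_const (measurable_fst.mul measurable_snd)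
  exact measurable_measure_prodMk_left hs

lemma c_le_one (μ : Measure ℝ) [IsProbabilityMeasure μ]
    (hae : ∀ᵐ m ∂μ, m ∈ Icc (0:ℝ) 1) (t : ℕ) :
    ∫⁻ m, (ENNReal.ofReal m) ^ t ∂μ ≤ 1 := by
  calc ∫⁻ m, (ENNReal.ofReal m) ^ t ∂μ ≤ ∫⁻ _, 1 ∂μ := by
        refine lintegral_mono_ae (hae.mono fun m hm => ?_)
        exact pow_le_one' (ENNReal.ofReal_le_one.2 hm.2) t
    _ = 1 := by simp

lemma master (μ ν : Measure ℝ) [IsProbabilityMeasure μ] [IsProbabilityMeasure ν]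
    {q : ℝ} (hq : 0 < q)
    (hrec : ∀ x : ℝ, ν (Ioi (x + q)) = ∫⁻ m, ν {r : ℝ | x < m * r} ∂μ)
    (hae : ∀ᵐ m ∂μ, m ∈ Icc (0:ℝ) 1)
    (t : ℕ) (n : ℕ) : ∀ (y s : ℝ), 0 < y → 0 < s →
    ν (Ioi (q * n + y)) ≤
      (∫⁻ m, (ENNReal.ofReal m) ^ t ∂μ) ^ n * ((ENNReal.ofReal s)⁻¹) ^ t + ν (Ioi (y / s)) := by
  set c := ∫⁻ m, (ENNReal.ofReal m) ^ t ∂μ with hc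
  have hc1 : c ≤ 1 := c_le_one μ hae t
  induction n with
  | zero =>
    intro y s hy hs
    simp only [Nat.cast_zero, mul_zero, zero_add, pow_zero, one_mul]
    rcases le_or_gt 1 s with h1 | h1
    · have hsub : Ioi y ⊆ Ioi (y / s) :=
        Ioi_subset_Ioi (div_le_self hy.le h1)
      exact le_add_left (measure_mono hsub)
    · have hK1 : (1:ℝ≥0∞) ≤ ((ENNReal.ofReal s)⁻¹) ^ t := by
        refine one_le_pow_of_one_le' ?_ t
        rw [ENNReal.one_le_inv]
        exact ENNReal.ofReal_le_one.2 h1.le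
      calc ν (Ioi y) ≤ 1 := prob_le_one
        _ ≤ _ := le_add_right hK1
  | succ n ih =>
    intro y s hy hs
    have hx : (0:ℝ) < q * n + y := by positivity
    have hrw : q * ((n:ℕ)+1 : ℕ) + y = (q * n + y) + q := by push_cast; ring
    set K := ((ENNReal.ofReal s)⁻¹) ^ t with hK
    have hKtop : K ≠ ∞ := by
      apply ENNReal.pow_ne_top
      simp [ENNReal.inv_ne_top]
      positivity
    have hcKtop : c ^ n * K ≠ ∞ :=
      ENNReal.mul_ne_top (by
        exact ne_top_of_le_ne_top (by simp) (pow_le_one' hc1 n)) hKtop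
    have hbound : ∀ᵐ m ∂μ, ν {r : ℝ | q * n + y < m * r} ≤
        (c ^ n * K) * (ENNReal.ofReal m) ^ t + ν (Ioi (y / s)) := by
      filter_upwards [hae] with m hm
      rcases eq_or_lt_of_le hm.1 with h0 | h0
      · have hempty : {r : ℝ | q * n + y < m * r} = ∅ := by
          ext r
          simp only [mem_setOf_eq, mem_empty_iff_false, iff_false, not_lt, ← h0, zero_mul]
          exact hx.le
        simp [hempty]
      · have hm1 : m ≤ 1 := hm.2
        have hsub : {r : ℝ | q * n + y < m * r} ⊆ Ioi (q * n + y / m) := by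
          intro r hr
          simp only [mem_setOf_eq] at hr
          have h1 : (q * n + y) / m < r := by
            rw [div_lt_iff₀ h0]
            nlinarith [hr]
          have h2 : q * n + y / m ≤ (q * n + y) / m := by
            rw [add_div]
            have : q * (n:ℝ) ≤ q * n / m := by
              rw [le_div_iff₀ h0]
              exact mul_le_of_le_one_right (by positivity) hm1
            linarith
          exact mem_Ioi.2 (lt_of_le_of_lt h2 h1)
        have heq2 : (y / m) / (s / m) = y / s := by
          field_simp
        have hKeq : ((ENNReal.ofReal (s / m))⁻¹) ^ t = (ENNReal.ofReal m) ^ t * K := by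
          rw [ENNReal.ofReal_div_of_pos h0,
            ENNReal.inv_div (Or.inl ENNReal.ofReal_ne_top)
              (Or.inl (ne_of_gt (ENNReal.ofReal_pos.2 h0))),
            div_eq_mul_inv, mul_pow]
        calc ν {r : ℝ | q * n + y < m * r} ≤ ν (Ioi (q * n + y / m)) := measure_mono hsub
          _ ≤ c ^ n * ((ENNReal.ofReal (s / m))⁻¹) ^ t + ν (Ioi ((y / m) / (s / m))) :=
              ih (y / m) (s / m) (by positivity) (by positivity)
          _ = (c ^ n * K) * (ENNReal.ofReal m) ^ t + ν (Ioi (y / s)) := by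
              rw [heq2, hKeq]; ring_nf
    calc ν (Ioi (q * ((n:ℕ)+1 : ℕ) + y)) = ∫⁻ m, ν {r : ℝ | q * n + y < m * r} ∂μ := by
          rw [hrw, hrec]
      _ ≤ ∫⁻ m, ((c ^ n * K) * (ENNReal.ofReal m) ^ t + ν (Ioi (y / s))) ∂μ :=
          lintegral_mono_ae hbound
      _ = (c ^ n * K) * c + ν (Ioi (y / s)) := by
          rw [lintegral_add_right _ measurable_const,
            lintegral_const_mul' _ _ hcKtop, lintegral_const, measure_univ, mul_one]
      _ = c ^ (n+1) * K + ν (Ioi (y / s)) := by ring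

/-- the singleton-lower-bound for lintegrals -/
lemma singleton_le_lintegral (μ : Measure ℝ) (f : ℝ → ℝ≥0∞) (hf : Measurable f) :
    μ {1} * f 1 ≤ ∫⁻ m, f m ∂μ := by
  calc μ {1} * f 1 = ∫⁻ m in {1}, f m ∂μ := by
        rw [Measure.restrict_singleton, lintegral_smul_measure, lintegral_dirac' _ hf, smul_eq_mul]
    _ ≤ ∫⁻ m, f m ∂μ := setLIntegral_le_lintegral _ _

lemma P_le_c (μ : Measure ℝ) (t : ℕ) :
    μ {1} ≤ ∫⁻ m, (ENNReal.ofReal m) ^ t ∂μ := by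
  have := singleton_le_lintegral μ (fun m => (ENNReal.ofReal m) ^ t)
    ((ENNReal.measurable_ofReal.comp measurable_id).pow_const t)
  simpa using this

lemma lower_iter (μ ν : Measure ℝ) [IsProbabilityMeasure ν] {q : ℝ}
    (hrec : ∀ x : ℝ, ν (Ioi (x + q)) = ∫⁻ m, ν {r : ℝ | x < m * r} ∂μ)
    (x0 : ℝ) : ∀ n : ℕ, μ {1} ^ n * ν (Ioi x0) ≤ ν (Ioi (q * n + x0)) := by
  intro n
  induction n with
  | zero => simp
  | succ n ih =>
    have hr : q * ((n:ℕ)+1:ℕ) + x0 = (q * n + x0) + q := by push_cast; ring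
    calc μ {1} ^ (n+1) * ν (Ioi x0) = μ {1} * (μ {1} ^ n * ν (Ioi x0)) := by ring
      _ ≤ μ {1} * ν (Ioi (q * n + x0)) := by gcongr
      _ = μ {1} * ν {r : ℝ | q * n + x0 < 1 * r} := by simp only [one_mul]; rfl
      _ ≤ ∫⁻ m, ν {r : ℝ | q * n + x0 < m * r} ∂μ :=
          singleton_le_lintegral μ _ (meas_slice ν _)
      _ = ν (Ioi (q * ((n:ℕ)+1:ℕ) + x0)) := by rw [hr, hrec]

lemma ctend (μ : Measure ℝ) [IsProbabilityMeasure μ]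
    (hae : ∀ᵐ m ∂μ, m ∈ Icc (0:ℝ) 1) :
    Tendsto (fun t : ℕ => ∫⁻ m, (ENNReal.ofReal m) ^ t ∂μ) atTop (nhds (μ {1})) := by
  have h := tendsto_lintegral_of_dominated_convergence (μ := μ)
    (F := fun t m => (ENNReal.ofReal m) ^ t)
    (f := ({1} : Set ℝ).indicator (fun _ => 1))
    (fun _ => 1)
    (fun t => (ENNReal.measurable_ofReal.comp measurable_id).pow_const t)
    (fun t => hae.mono fun m hm => pow_le_one' (ENNReal.ofReal_le_one.2 hm.2) t)
    (by simp)
    ?_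
  · have : ∫⁻ m, ({1} : Set ℝ).indicator (fun _ => (1:ℝ≥0∞)) m ∂μ = μ {1} := by
      rw [lintegral_indicator (measurableSet_singleton 1), setLIntegral_one]
    rwa [this] at h
  · filter_upwards [hae] with m hm
    rcases eq_or_lt_of_le hm.2 with h1 | h1
    · simp only [h1, indicator_of_mem, mem_singleton_iff, ENNReal.ofReal_one, one_pow]
      simp [h1]
    · have hne : m ∉ ({1} : Set ℝ) := by simp [ne_of_lt h1]
      rw [indicator_of_notMem hne]
      exact ENNReal.tendsto_pow_atTop_nhds_zero_of_lt_one (ENNReal.ofReal_lt_one.2 h1)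

lemma upper (μ ν : Measure ℝ) [IsProbabilityMeasure μ] [IsProbabilityMeasure ν]
    {q : ℝ} (hq : 0 < q)
    (hrec : ∀ x : ℝ, ν (Ioi (x + q)) = ∫⁻ m, ν {r : ℝ | x < m * r} ∂μ)
    (hae : ∀ᵐ m ∂μ, m ∈ Icc (0:ℝ) 1)
    (t : ℕ) {θ : ℝ} (hθ0 : 0 < θ) (hθ : θ ≤ 1/2)
    (hclt : (∫⁻ m, (ENNReal.ofReal m) ^ t ∂μ) < 1) :
    ∀ x : ℝ, q / (1-θ) ≤ x →
      ν (Ioi x) ≤ (((ENNReal.ofReal (θ/2))⁻¹) ^ t *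
        (1 - ∫⁻ m, (ENNReal.ofReal m) ^ t ∂μ)⁻¹) * (∫⁻ m, (ENNReal.ofReal m) ^ t ∂μ) ^ (⌊(1-θ)*x/q⌋₊) := by
  set c := ∫⁻ m, (ENNReal.ofReal m) ^ t ∂μ with hc
  set σ := θ/2 with hσ
  have hσ0 : 0 < σ := by positivity
  set D := ((ENNReal.ofReal σ)⁻¹) ^ t with hD
  have h1θ : 0 < 1 - θ := by linarith
  set X1 := q / (1-θ) with hX1
  have hX1pos : 0 < X1 := by positivity
  set N : ℝ → ℕ := fun z => ⌊(1-θ)*z/q⌋₊ with hN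
  -- single step
  have single : ∀ z : ℝ, X1 ≤ z → ν (Ioi z) ≤ D * c ^ (N z) + ν (Ioi (2*z)) := by
    intro z hz
    have hz0 : 0 < z := lt_of_lt_of_le hX1pos hz
    have hNz : q * (N z) ≤ (1-θ)*z := by
      have hfl := Nat.floor_le (show (0:ℝ) ≤ (1-θ)*z/q by positivity)
      calc q * (N z : ℝ) ≤ q * ((1-θ)*z/q) := by
            exact mul_le_mul_of_nonneg_left hfl hq.le
        _ = (1-θ)*z := by field_simp
    set y := z - q * N z with hy
    have hyθ : θ * z ≤ y := by
      have : (1-θ)*z + θ*z = z := by ring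
      simp only [hy]; nlinarith
    have hy0 : 0 < y := lt_of_lt_of_le (by positivity) hyθ
    have hmb := master μ ν hq hrec hae t (N z) y σ hy0 hσ0
    have hzy : q * (N z) + y = z := by simp [hy]
    rw [hzy] at hmb
    refine hmb.trans ?_
    have h2z : 2*z ≤ y / σ := by
      rw [le_div_iff₀ hσ0]
      calc 2*z*σ = θ*z := by rw [hσ]; ring
        _ ≤ y := hyθ
    exact add_le_add (le_of_eq (mul_comm _ _)) (measure_mono (Ioi_subset_Ioi h2z))
  -- N grows along doubling
  have Nstep : ∀ z : ℝ, X1 ≤ z → N z + 1 ≤ N (2*z) := by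
    intro z hz
    have hz0 : 0 < z := lt_of_lt_of_le hX1pos hz
    set u := (1-θ)*z/q with hu
    have hu1 : 1 ≤ u := by
      have hqz : q ≤ z * (1-θ) := (div_le_iff₀ h1θ).1 hz
      rw [hu, one_le_div hq]
      nlinarith
    have h2u : u + 1 ≤ (1-θ)*(2*z)/q := by
      have : (1-θ)*(2*z)/q = 2*u := by rw [hu]; ring
      rw [this]; linarith
    calc N z + 1 = ⌊u + 1⌋₊ := by rw [hN, Nat.floor_add_one (by positivity)]
      _ ≤ N (2*z) := Nat.floor_le_floor h2u
  have hcne : c ≠ ∞ := ne_top_of_lt (lt_of_lt_of_le hclt le_top)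
  -- iterate
  intro x hx
  have hx0 : 0 < x := lt_of_lt_of_le hX1pos hx
  have hXj : ∀ J : ℕ, X1 ≤ 2^J * x := by
    intro J
    calc X1 ≤ x := hx
      _ ≤ 2^J * x := le_mul_of_one_le_left hx0.le (one_le_pow₀ (by norm_num))
  have hNJ : ∀ J : ℕ, N x + J ≤ N (2^J * x) := by
    intro J
    induction J with
    | zero => simp
    | succ J ihJ =>
      have := Nstep (2^J * x) (hXj J)
      have h2 : (2:ℝ) * (2^J * x) = 2^(J+1) * x := by ring
      rw [h2] at this
      omega
  have iterJ : ∀ J : ℕ, ν (Ioi x) ≤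
      (∑ j ∈ Finset.range J, D * c ^ (N x + j)) + ν (Ioi (2^J * x)) := by
    intro J
    induction J with
    | zero => simp
    | succ J ihJ =>
      calc ν (Ioi x) ≤ (∑ j ∈ Finset.range J, D * c ^ (N x + j)) + ν (Ioi (2^J * x)) := ihJ
        _ ≤ (∑ j ∈ Finset.range J, D * c ^ (N x + j)) +
            (D * c ^ (N (2^J * x)) + ν (Ioi (2*(2^J * x)))) := by
            gcongr
            exact single _ (hXj J)
        _ ≤ (∑ j ∈ Finset.range J, D * c ^ (N x + j)) +
            (D * c ^ (N x + J) + ν (Ioi (2^(J+1) * x))) := by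
            have hpow : c ^ (N ((2:ℝ)^J * x)) ≤ c ^ (N x + J) := by
              obtain ⟨k, hk⟩ := Nat.exists_eq_add_of_le (hNJ J)
              rw [hk, pow_add]
              exact mul_le_of_le_one_right' (pow_le_one' hclt.le k)
            have h2 : (2:ℝ) * (2^J * x) = 2^(J+1) * x := by ring
            rw [h2]
            exact add_le_add_right (add_le_add_left (mul_le_mul_right hpow D) _) _
        _ = (∑ j ∈ Finset.range (J+1), D * c ^ (N x + j)) + ν (Ioi (2^(J+1) * x)) := by
            rw [Finset.sum_range_succ, add_assoc]
  have sumb : ∀ J : ℕ, (∑ j ∈ Finset.range J, D * c ^ (N x + j)) ≤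
      (D * (1 - c)⁻¹) * c ^ (N x) := by
    intro J
    calc (∑ j ∈ Finset.range J, D * c ^ (N x + j))
        = D * c ^ (N x) * (∑ j ∈ Finset.range J, c ^ j) := by
          rw [Finset.mul_sum]; congr 1; funext j; rw [pow_add]; ring
      _ ≤ D * c ^ (N x) * (1 - c)⁻¹ := by
          gcongr
          rw [← ENNReal.tsum_geometric]
          exact ENNReal.sum_le_tsum _
      _ = (D * (1 - c)⁻¹) * c ^ (N x) := by ring
  have hlim : Tendsto (fun J : ℕ => ν (Ioi ((2:ℝ)^J * x))) atTop (nhds 0) := by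
    have hmono : Antitone (fun J : ℕ => Ioi ((2:ℝ)^J * x)) := by
      intro J J' hJ
      apply Ioi_subset_Ioi
      have : (2:ℝ)^J ≤ 2^J' := by
        apply pow_le_pow_right₀ (by norm_num) hJ
      nlinarith
    have hempty : (⋂ J : ℕ, Ioi ((2:ℝ)^J * x)) = ∅ := by
      ext r
      simp only [mem_iInter, mem_Ioi, mem_empty_iff_false, iff_false, not_forall, not_lt]
      obtain ⟨J, hJ⟩ := exists_nat_gt (r / x)
      refine ⟨J, ?_⟩
      have h2J : (J:ℝ) ≤ 2^J := by
        exact_mod_cast (Nat.lt_two_pow_self (n := J)).le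
      have : r / x < 2^J := lt_of_lt_of_le hJ h2J
      rw [div_lt_iff₀ hx0] at this
      linarith
    have := tendsto_measure_iInter_atTop (μ := ν) (s := fun J : ℕ => Ioi ((2:ℝ)^J * x))
      (fun J => (measurableSet_Ioi).nullMeasurableSet) hmono ⟨0, measure_ne_top ν _⟩
    rw [hempty] at this
    simpa [Function.comp_def] using this
  have final : ν (Ioi x) ≤ (D * (1 - c)⁻¹) * c ^ (N x) := by
    have htend : Tendsto (fun J : ℕ => (D * (1 - c)⁻¹) * c ^ (N x) + ν (Ioi ((2:ℝ)^J * x)))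
        atTop (nhds ((D * (1 - c)⁻¹) * c ^ (N x))) := by
      have := Tendsto.const_add ((D * (1 - c)⁻¹) * c ^ (N x)) hlim
      simpa using this
    refine ge_of_tendsto' htend fun J => ?_
    exact (iterJ J).trans (by gcongr; exact sumb J)
  exact final

lemma div_mono_num {a b c : ℝ} (h : a ≤ b) (hc : 0 < c) : a / c ≤ b / c := by gcongr

end Stmt4Aux

theorem stmt_4 {Ω : Type*} [MeasureSpace Ω] [IsProbabilityMeasure (ℙ : Measure Ω)]
    (R M : Ω → ℝ) (hR : Measurable R) (hM : Measurable M)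
    (hindep : IndepFun M R ℙ)
    (q : ℝ) (hq : 0 < q)
    (heq : Measure.map R ℙ = Measure.map (fun ω => q + M ω * R ω) ℙ)
    (hM01 : ℙ {ω | M ω ∈ Set.Icc (0 : ℝ) 1} = 1)
    (p : ℝ) (hp : p = (ℙ {ω | M ω = 1}).toReal) (hp0 : 0 < p) (hp1 : p < 1) :
    Tendsto (fun x => Real.log ((ℙ {ω | R ω > x}).toReal) / x) atTop
      (nhds (Real.log p / q)) := by
  set μ := Measure.map M ℙ with hμdef
  set ν := Measure.map R ℙ with hνdef
  have hμprob : IsProbabilityMeasure μ := Measure.isProbabilityMeasure_map hM.aemeasurable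
  have hνprob : IsProbabilityMeasure ν := Measure.isProbabilityMeasure_map hR.aemeasurable
  have hpair : Measurable fun ω => (M ω, R ω) := hM.prodMk hR
  have hprod : Measure.map (fun ω => (M ω, R ω)) ℙ = μ.prod ν :=
    (indepFun_iff_map_prod_eq_prod_map_map hM.aemeasurable hR.aemeasurable).1 hindep
  have hrec : ∀ x : ℝ, ν (Ioi (x + q)) = ∫⁻ m, ν {r : ℝ | x < m * r} ∂μ := by
    intro x
    have hs : MeasurableSet {pp : ℝ × ℝ | x < pp.1 * pp.2} :=
      measurableSet_lt measurable_const (measurable_fst.mul measurable_snd)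
    have hmeas : Measurable fun ω => q + M ω * R ω := measurable_const.add (hM.mul hR)
    have h1 : ν (Ioi (x + q)) = ℙ ((fun ω => q + M ω * R ω) ⁻¹' (Ioi (x + q))) := by
      rw [heq, Measure.map_apply hmeas measurableSet_Ioi]
    have h2 : ((fun ω => q + M ω * R ω) ⁻¹' (Ioi (x + q))) =
        ((fun ω => (M ω, R ω)) ⁻¹' {pp : ℝ × ℝ | x < pp.1 * pp.2}) := by
      ext ω
      simp only [Set.mem_preimage, mem_Ioi, mem_setOf_eq]
      constructor <;> intro h <;> linarith
    rw [h1, h2, ← Measure.map_apply hpair hs, hprod, Measure.prod_apply hs]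
    rfl
  have hae : ∀ᵐ m ∂μ, m ∈ Icc (0:ℝ) 1 := by
    have hsm : MeasurableSet (Icc (0:ℝ) 1) := measurableSet_Icc
    have hc0 : μ (Icc (0:ℝ) 1)ᶜ = 0 := by
      rw [hμdef, Measure.map_apply hM hsm.compl]
      exact (prob_compl_eq_zero_iff (hM hsm)).2 hM01
    exact hc0
  -- choose x0 with ν (Ioi x0) ≠ 0
  have hx0ex : ∃ n : ℕ, ν (Ioi (-(n:ℝ))) ≠ 0 := by
    by_contra h
    push_neg at h
    have hU : (⋃ n : ℕ, Ioi (-(n:ℝ))) = univ := by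
      ext r
      simp only [mem_iUnion, mem_Ioi, mem_univ, iff_true]
      obtain ⟨n, hn⟩ := exists_nat_gt (-r)
      exact ⟨n, by linarith⟩
    have h0 := measure_iUnion_null (μ := ν) h
    rw [hU, measure_univ] at h0
    exact one_ne_zero h0
  obtain ⟨n0, hb0⟩ := hx0ex
  set x0 : ℝ := -(n0:ℝ) with hx0def
  have hβtop : ν (Ioi x0) ≠ ∞ := measure_ne_top ν _
  set b := (ν (Ioi x0)).toReal with hbdef
  have hb : 0 < b := ENNReal.toReal_pos hb0 hβtop
  have hP : μ {(1:ℝ)} = ENNReal.ofReal p := by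
    have h1 : μ {(1:ℝ)} = ℙ {ω | M ω = 1} := by
      rw [hμdef, Measure.map_apply hM (measurableSet_singleton 1)]
      rfl
    rw [h1, hp, ENNReal.ofReal_toReal (measure_ne_top _ _)]
  have hGfun : (fun x : ℝ => Real.log ((ℙ {ω | R ω > x}).toReal) / x)
      = fun x : ℝ => Real.log ((ν (Ioi x)).toReal) / x := by
    funext x
    congr 3
    rw [hνdef, Measure.map_apply hR measurableSet_Ioi]
    rfl
  rw [hGfun]
  have hlogp : Real.log p < 0 := Real.log_neg hp0 hp1
  have hlow : ∀ x : ℝ, ENNReal.ofReal p ^ (⌈(x - x0)/q⌉₊) * ν (Ioi x0) ≤ ν (Ioi x) := by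
    intro x
    set n := ⌈(x - x0)/q⌉₊ with hn
    have hxle : x ≤ q * n + x0 := by
      have h1 := Nat.le_ceil ((x - x0)/q)
      rw [div_le_iff₀ hq] at h1
      rw [hn]
      nlinarith
    calc ENNReal.ofReal p ^ n * ν (Ioi x0) = μ {(1:ℝ)} ^ n * ν (Ioi x0) := by rw [hP]
      _ ≤ ν (Ioi (q * n + x0)) := Stmt4Aux.lower_iter μ ν hrec x0 n
      _ ≤ ν (Ioi x) := measure_mono (Ioi_subset_Ioi hxle)
  have hlowR : ∀ x : ℝ, p ^ (⌈(x - x0)/q⌉₊) * b ≤ (ν (Ioi x)).toReal := by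
    intro x
    have h1 := ENNReal.toReal_mono (measure_ne_top ν _) (hlow x)
    rwa [ENNReal.toReal_mul, ENNReal.toReal_pow, ENNReal.toReal_ofReal hp0.le] at h1
  have hGpos : ∀ x : ℝ, 0 < (ν (Ioi x)).toReal := fun x =>
    lt_of_lt_of_le (by positivity) (hlowR x)
  clear_value b
  clear_value x0
  clear_value ν
  clear_value μ
  rw [tendsto_order]
  constructor
  · -- lower side
    intro a ha
    set ℓ : ℝ → ℝ := fun x => (Real.log p / q) * (1 - x0/x) + (Real.log p + Real.log b)/x with hℓ
    have htl : Tendsto ℓ atTop (nhds (Real.log p / q)) := by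
      have h1 : Tendsto (fun x : ℝ => x0/x) atTop (nhds 0) :=
        tendsto_const_nhds.div_atTop tendsto_id
      have h2 : Tendsto (fun x : ℝ => (Real.log p + Real.log b)/x) atTop (nhds 0) :=
        tendsto_const_nhds.div_atTop tendsto_id
      have h3 : Tendsto (fun x:ℝ => (Real.log p / q) * (1 - x0/x)) atTop
          (nhds ((Real.log p / q) * (1 - 0))) :=
        tendsto_const_nhds.mul (tendsto_const_nhds.sub h1)
      have h4 := h3.add h2
      simpa using h4
    filter_upwards [htl.eventually_const_lt ha, eventually_ge_atTop (max x0 1)] with x hax hx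
    have hx1 : (1:ℝ) ≤ x := le_trans (le_max_right _ _) hx
    have hxx0 : x0 ≤ x := le_trans (le_max_left _ _) hx
    have hx0' : (0:ℝ) < x := lt_of_lt_of_le one_pos hx1
    refine lt_of_lt_of_le hax ?_
    set n := ⌈(x - x0)/q⌉₊ with hn
    have hnle : (n:ℝ) ≤ (x - x0)/q + 1 := by
      rw [hn]
      exact (Nat.ceil_lt_add_one (div_nonneg (by linarith) hq.le)).le
    have hlog1 : Real.log (p ^ n * b) ≤ Real.log ((ν (Ioi x)).toReal) :=
      Real.log_le_log (by positivity) (hlowR x)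
    have hlog2 : Real.log (p ^ n * b) = (n:ℝ) * Real.log p + Real.log b := by
      rw [Real.log_mul (by positivity) (ne_of_gt hb), Real.log_pow]
    have hmul := mul_le_mul_of_nonpos_right hnle hlogp.le
    have hkey : ((x - x0)/q + 1) * Real.log p + Real.log b ≤ Real.log ((ν (Ioi x)).toReal) := by
      nlinarith [hlog1, hlog2, hmul]
    have hℓeq : ℓ x = (((x - x0)/q + 1) * Real.log p + Real.log b)/x := by
      rw [hℓ]
      field_simp
      ring
    rw [hℓeq]
    exact Stmt4Aux.div_mono_num hkey hx0'
  · -- upper side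
    intro a ha
    set ε := a - Real.log p / q with hε
    have hε0 : 0 < ε := by rw [hε]; linarith
    set A := -Real.log p with hA
    have hA0 : 0 < A := by rw [hA]; linarith
    clear_value ε
    clear_value A
    set δ := min ((1-p)/2) (p*q*ε/4) with hδ
    have hδ0 : 0 < δ := lt_min (by linarith) (by positivity)
    have hPlt : μ {(1:ℝ)} < ENNReal.ofReal (p + δ) := by
      rw [hP]
      exact (ENNReal.ofReal_lt_ofReal_iff (by positivity)).2 (by linarith)
    obtain ⟨t, hct⟩ := ((Stmt4Aux.ctend μ hae).eventually_lt_const hPlt).exists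
    set c := ∫⁻ m, (ENNReal.ofReal m) ^ t ∂μ with hcdef
    have hcP : ENNReal.ofReal p ≤ c := by rw [← hP]; exact Stmt4Aux.P_le_c μ t
    have hcle : c ≤ ENNReal.ofReal (p + δ) := hct.le
    have hclt1 : c < 1 := lt_of_le_of_lt hcle (by
      rw [ENNReal.ofReal_lt_one]
      have h1 : δ ≤ (1-p)/2 := min_le_left _ _
      linarith)
    have hcnetop : c ≠ ∞ := ne_top_of_lt (lt_of_lt_of_le hclt1 le_top)
    set c' := c.toReal with hc'def
    have hc'p : p ≤ c' := by
      have h1 := ENNReal.toReal_mono hcnetop hcP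
      rwa [ENNReal.toReal_ofReal hp0.le] at h1
    have hc'0 : 0 < c' := lt_of_lt_of_le hp0 hc'p
    have hc'1 : c' < 1 := by
      have h1 := (ENNReal.toReal_lt_toReal hcnetop (by simp : (1:ℝ≥0∞) ≠ ∞)).2 hclt1
      simpa using h1
    have hc'le : c' ≤ p + δ := by
      have h1 := ENNReal.toReal_mono ENNReal.ofReal_ne_top hcle
      rwa [ENNReal.toReal_ofReal (by positivity)] at h1
    have hlogc'le : Real.log c' ≤ Real.log p + q*ε/4 := by
      have h1 : Real.log c' ≤ Real.log (p + δ) := Real.log_le_log hc'0 hc'le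
      have h2 : Real.log (p + δ) - Real.log p ≤ δ/p := by
        rw [← Real.log_div (by positivity) (ne_of_gt hp0)]
        have h3 := Real.log_le_sub_one_of_pos (show 0 < (p+δ)/p by positivity)
        have heq2 : (p+δ)/p - 1 = δ/p := by field_simp; ring
        linarith
      have h3 : δ/p ≤ q*ε/4 := by
        have h4 : δ ≤ p*q*ε/4 := min_le_right _ _
        rw [div_le_iff₀ hp0]
        nlinarith
      linarith
    clear_value δ
    have hlogc'ge : Real.log p ≤ Real.log c' := Real.log_le_log hp0 hc'p
    have hlogc'neg : Real.log c' < 0 := Real.log_neg hc'0 hc'1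
    set θ := min (1/2 : ℝ) (q*ε/(4*A)) with hθdef
    have hθ0 : 0 < θ := lt_min (by norm_num) (by positivity)
    have hθle : θ ≤ 1/2 := min_le_left _ _
    have hθ2 : θ ≤ q*ε/(4*A) := min_le_right _ _
    clear_value θ
    have hup := Stmt4Aux.upper μ ν hq hrec hae t hθ0 hθle hclt1
    rw [← hcdef] at hup
    clear_value c'
    clear_value c
    set D := ((ENNReal.ofReal (θ/2))⁻¹) ^ t with hDdef
    set E := D * (1 - c)⁻¹ with hEdef
    have hDnetop : D ≠ ∞ := by
      apply ENNReal.pow_ne_top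
      rw [ENNReal.inv_ne_top]
      simp only [ne_eq, ENNReal.ofReal_eq_zero, not_le]
      positivity
    have h1c : (1 - c) ≠ 0 := by
      rw [ne_eq, tsub_eq_zero_iff_le]
      exact not_le.2 hclt1
    have hEnetop : E ≠ ∞ := ENNReal.mul_ne_top hDnetop (ENNReal.inv_ne_top.2 h1c)
    set K := E.toReal with hKdef
    have hD1 : (1:ℝ≥0∞) ≤ D := by
      refine one_le_pow_of_one_le' ?_ t
      rw [ENNReal.one_le_inv]
      apply ENNReal.ofReal_le_one.2
      linarith
    have hE1 : (1:ℝ≥0∞) ≤ E := by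
      calc (1:ℝ≥0∞) = 1 * 1 := (one_mul 1).symm
        _ ≤ D * (1 - c)⁻¹ := mul_le_mul' hD1 (ENNReal.one_le_inv.2 tsub_le_self)
    have hK1 : (1:ℝ) ≤ K := by
      have h1 := ENNReal.toReal_mono hEnetop hE1
      simpa using h1
    have hK0 : (0:ℝ) < K := lt_of_lt_of_le one_pos hK1
    clear_value K
    clear_value E
    clear_value D
    have hupR : ∀ x : ℝ, max (q/(1-θ)) 1 ≤ x →
        Real.log ((ν (Ioi x)).toReal) ≤ Real.log K + (⌊(1-θ)*x/q⌋₊ : ℝ) * Real.log c' := by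
      intro x hx
      have h1 := hup x (le_trans (le_max_left _ _) hx)
      have h2 : (ν (Ioi x)).toReal ≤ K * c' ^ (⌊(1-θ)*x/q⌋₊) := by
        have h3 := ENNReal.toReal_mono
          (ENNReal.mul_ne_top hEnetop (ENNReal.pow_ne_top hcnetop)) h1
        rw [hKdef, hc'def]
        rwa [ENNReal.toReal_mul, ENNReal.toReal_pow] at h3
      calc Real.log ((ν (Ioi x)).toReal) ≤ Real.log (K * c' ^ (⌊(1-θ)*x/q⌋₊)) :=
            Real.log_le_log (hGpos x) h2
        _ = Real.log K + (⌊(1-θ)*x/q⌋₊:ℝ) * Real.log c' := by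
            rw [Real.log_mul (ne_of_gt hK0) (by positivity), Real.log_pow]
    have hrate : (1-θ) * Real.log c' / q ≤ Real.log p / q + ε/2 := by
      have h1 : θ * A ≤ q*ε/4 := by
        calc θ*A ≤ (q*ε/(4*A))*A := mul_le_mul_of_nonneg_right hθ2 hA0.le
          _ = q*ε/4 := by field_simp
      have h2 : -Real.log c' ≤ A := by rw [hA]; linarith
      have h4 : (1-θ)*Real.log c' ≤ Real.log p + q*ε/2 := by
        have h5 : θ*(-Real.log c') ≤ θ*A := mul_le_mul_of_nonneg_left h2 hθ0.le
        have h6 : (1-θ)*Real.log c' = Real.log c' + θ*(-Real.log c') := by ring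
        linarith only [h5, h1, hlogc'le, h6]
      calc (1-θ)*Real.log c'/q ≤ (Real.log p + q*ε/2)/q :=
            Stmt4Aux.div_mono_num h4 hq
        _ = Real.log p / q + ε/2 := by field_simp
    have htail : Tendsto (fun x : ℝ => (Real.log K - Real.log c')/x) atTop (nhds 0) :=
      tendsto_const_nhds.div_atTop tendsto_id
    filter_upwards [htail.eventually_lt_const (show (0:ℝ) < ε/2 by positivity),
      eventually_ge_atTop (max (max (q/(1-θ)) 1) 1)] with x htx hx
    have hx1 : (1:ℝ) ≤ x := le_trans (le_max_right _ _) hx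
    have hx0' : (0:ℝ) < x := lt_of_lt_of_le one_pos hx1
    have hxm : max (q/(1-θ)) 1 ≤ x := le_trans (le_max_left _ _) hx
    have hN2 : ((1-θ)*x/q - 1) ≤ (⌊(1-θ)*x/q⌋₊ : ℝ) := (Nat.sub_one_lt_floor _).le
    have hmain : Real.log ((ν (Ioi x)).toReal) ≤
        Real.log K - Real.log c' + (1-θ)*x/q * Real.log c' := by
      have h1 := hupR x hxm
      have hmul : (⌊(1-θ)*x/q⌋₊ : ℝ) * Real.log c' ≤ ((1-θ)*x/q - 1) * Real.log c' :=
        mul_le_mul_of_nonpos_right hN2 hlogc'neg.le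
      have hring : ((1-θ)*x/q - 1) * Real.log c' = (1-θ)*x/q * Real.log c' - Real.log c' := by
        ring
      linarith only [h1, hmul, hring]
    have hdiv : Real.log ((ν (Ioi x)).toReal)/x ≤
        (Real.log K - Real.log c')/x + (1-θ)*Real.log c'/q := by
      have h1 : Real.log ((ν (Ioi x)).toReal)/x ≤
          (Real.log K - Real.log c' + (1-θ)*x/q * Real.log c')/x :=
        Stmt4Aux.div_mono_num hmain hx0'
      have h2 : (Real.log K - Real.log c' + (1-θ)*x/q * Real.log c')/x
          = (Real.log K - Real.log c')/x + (1-θ)*Real.log c'/q := by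
        field_simp
      linarith only [h1, h2]
    calc Real.log ((ν (Ioi x)).toReal)/x
        ≤ (Real.log K - Real.log c')/x + (1-θ)*Real.log c'/q := hdiv
      _ < ε/2 + (Real.log p/q + ε/2) := add_lt_add_of_lt_of_le htx hrate
      _ = a := by rw [hε]; ring
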